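/- In model R, E(W_n) = (W_0/T_0)·(n·m·c + T_0) for all n ≥ 0, and the second moment is E(W_n²) = [C(n−1+μ_1, n)·C(n−1+μ_2, n) / C(n−1+T_0/(mc), n)²] · ( W_0² + (W_0·c²·m/T_0) · Σ_{ℓ=0}^{n−1} C(ℓ+T_0/(mc), ℓ+1)² / (C(ℓ+μ_1, ℓ+1)·C(ℓ+μ_2, ℓ+1)) ), where μ_{1,2} := (T_0 + mc ± c·√m)/(mc) and C(x,n) denotes the generalized binomial coefficient for real x; this determines V(W_n) = E(W_n²) − E(W_n)². -/

import Mathlib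

open Finset

/-- Total number of balls after `n` draws: `T_n = W_0 + B_0 + n·m·c`. -/
def urnT (W0 B0 m c n : ℕ) : ℕ := W0 + B0 + n * m * c

/-- Probability mass function of the number of white balls after `n` draws in
model `R` (at each step `m` balls are drawn one by one with replacement and, for
each drawn ball, `c` balls of the same color are added). -/
noncomputable def massR (W0 B0 m c : ℕ) : ℕ → ℕ → ℝ
  | 0 => fun v => if v = W0 then 1 else 0
  | n + 1 => fun v =>
      ∑ w ∈ Finset.range (urnT W0 B0 m c n + 1), ∑ k ∈ Finset.range (m + 1),
        if v = w + c * k then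
          massR W0 B0 m c n w *
            ((Nat.choose m k : ℝ) * (w : ℝ) ^ k *
                ((urnT W0 B0 m c n : ℝ) - (w : ℝ)) ^ (m - k) /
              (urnT W0 B0 m c n : ℝ) ^ m)
        else 0

/-- The `s`-th moment `E(W_n^s)` of the number of white balls in model `R`. -/
noncomputable def momR (W0 B0 m c s n : ℕ) : ℝ :=
  ∑ w ∈ Finset.range (urnT W0 B0 m c n + 1), massR W0 B0 m c n w * (w : ℝ) ^ s

/-- Generalized binomial coefficient `C(x,n) = x(x-1)⋯(x-n+1)/n!` for real `x`. -/
noncomputable def gchoose (x : ℝ) (n : ℕ) : ℝ :=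
  (∏ i ∈ Finset.range n, (x - (i : ℝ))) / (Nat.factorial n : ℝ)

lemma momR_succ (W0 B0 m c s n : ℕ) :
    momR W0 B0 m c s (n+1)
      = ∑ w ∈ range (urnT W0 B0 m c n + 1), massR W0 B0 m c n w *
          ∑ k ∈ range (m+1),
            ((m.choose k : ℝ) * (w : ℝ) ^ k * ((urnT W0 B0 m c n : ℝ) - (w : ℝ)) ^ (m - k) /
                (urnT W0 B0 m c n : ℝ) ^ m) * (((w + c * k : ℕ) : ℝ)) ^ s := by
  rw [momR]
  show ∑ v ∈ range (urnT W0 B0 m c (n+1) + 1),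
      (∑ w ∈ range (urnT W0 B0 m c n + 1), ∑ k ∈ range (m + 1),
        if v = w + c * k then
          massR W0 B0 m c n w *
            ((m.choose k : ℝ) * (w : ℝ) ^ k * ((urnT W0 B0 m c n : ℝ) - (w : ℝ)) ^ (m - k) /
              (urnT W0 B0 m c n : ℝ) ^ m)
        else 0) * (v : ℝ) ^ s = _
  simp only [Finset.sum_mul]
  rw [Finset.sum_comm]
  refine Finset.sum_congr rfl fun w hw => ?_
  rw [Finset.mul_sum, Finset.sum_comm]
  refine Finset.sum_congr rfl fun k hk => ?_
  have hstep : ∀ v : ℕ,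
      (if v = w + c * k then
          massR W0 B0 m c n w *
            ((m.choose k : ℝ) * (w : ℝ) ^ k * ((urnT W0 B0 m c n : ℝ) - (w : ℝ)) ^ (m - k) /
              (urnT W0 B0 m c n : ℝ) ^ m) else 0) * (v : ℝ) ^ s
      = if v = w + c * k then
          massR W0 B0 m c n w *
            (((m.choose k : ℝ) * (w : ℝ) ^ k * ((urnT W0 B0 m c n : ℝ) - (w : ℝ)) ^ (m - k) /
              (urnT W0 B0 m c n : ℝ) ^ m) * ((v : ℕ) : ℝ) ^ s) else 0 := by
    intro v
    split
    · ring
    · simp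
  simp only [hstep]
  have hrw : ∀ v ∈ range (urnT W0 B0 m c (n+1) + 1),
      (if v = w + c * k then
          massR W0 B0 m c n w *
            (((m.choose k : ℝ) * (w : ℝ) ^ k * ((urnT W0 B0 m c n : ℝ) - (w : ℝ)) ^ (m - k) /
              (urnT W0 B0 m c n : ℝ) ^ m) * ((v : ℕ) : ℝ) ^ s) else 0)
      = if v = w + c * k then
          massR W0 B0 m c n w *
            (((m.choose k : ℝ) * (w : ℝ) ^ k * ((urnT W0 B0 m c n : ℝ) - (w : ℝ)) ^ (m - k) /
              (urnT W0 B0 m c n : ℝ) ^ m) * ((w + c * k : ℕ) : ℝ) ^ s) else 0 := by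
    intro v _
    split
    · next h => subst h; rfl
    · rfl
  rw [Finset.sum_congr rfl hrw, Finset.sum_ite_eq']
  have hmem : w + c * k ∈ range (urnT W0 B0 m c (n+1) + 1) := by
    simp only [Finset.mem_range] at hw hk ⊢
    simp only [urnT] at hw ⊢
    have h1 : c * k ≤ c * m := Nat.mul_le_mul_left c (by omega)
    have h2 : (n+1) * m * c = n * m * c + m * c := by ring
    have h3 : c * m = m * c := Nat.mul_comm c m
    omega
  rw [if_pos hmem]

lemma binom_sum0 (m : ℕ) (x y : ℝ) :
    ∑ k ∈ range (m+1), (m.choose k : ℝ) * x ^ k * y ^ (m - k) = (x + y) ^ m := by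
  rw [add_pow]
  exact Finset.sum_congr rfl fun k _ => by ring

lemma binom_sum1 (m : ℕ) (x y : ℝ) :
    ∑ k ∈ range (m+1), (k : ℝ) * ((m.choose k : ℝ) * x ^ k * y ^ (m - k))
      = m * x * (x + y) ^ (m - 1) := by
  cases m with
  | zero => simp
  | succ mm =>
    rw [Finset.sum_range_succ']
    simp only [Nat.cast_zero, zero_mul, add_zero]
    have key : ∀ j, ((j+1 : ℕ) : ℝ) * ((mm+1).choose (j+1) : ℝ)
        = ((mm+1 : ℕ) : ℝ) * (mm.choose j : ℝ) := by
      intro j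
      rw [← Nat.cast_mul, ← Nat.cast_mul]
      congr 1
      rw [Nat.mul_comm (j+1)]
      exact (Nat.add_one_mul_choose_eq mm j).symm
    calc ∑ j ∈ range (mm+1), ((j+1 : ℕ) : ℝ) * (((mm+1).choose (j+1) : ℝ) * x ^ (j+1) * y ^ (mm+1 - (j+1)))
        = (mm+1 : ℝ) * x * ∑ j ∈ range (mm+1), (mm.choose j : ℝ) * x ^ j * y ^ (mm - j) := by
          rw [Finset.mul_sum]
          refine Finset.sum_congr rfl fun j _ => ?_
          have := key j
          push_cast at this ⊢
          linear_combination (x ^ (j+1) * y ^ (mm - j)) * this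
      _ = (mm+1 : ℝ) * x * (x + y) ^ mm := by rw [binom_sum0]
      _ = ((mm+1 : ℕ) : ℝ) * x * (x + y) ^ (mm + 1 - 1) := by push_cast; ring_nf

lemma binom_sum2' (m : ℕ) (x y : ℝ) :
    ∑ k ∈ range (m+1), (k : ℝ) * ((k : ℝ) - 1) * ((m.choose k : ℝ) * x ^ k * y ^ (m - k))
      = (m : ℝ) * ((m - 1 : ℕ) : ℝ) * x ^ 2 * (x + y) ^ (m - 2) := by
  cases m with
  | zero => simp
  | succ mm =>
    rw [Finset.sum_range_succ']
    simp only [Nat.cast_zero, zero_mul, add_zero]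
    have key : ∀ j, ((j+1 : ℕ) : ℝ) * ((mm+1).choose (j+1) : ℝ)
        = ((mm+1 : ℕ) : ℝ) * (mm.choose j : ℝ) := by
      intro j
      rw [← Nat.cast_mul, ← Nat.cast_mul]
      congr 1
      rw [Nat.mul_comm (j+1)]
      exact (Nat.add_one_mul_choose_eq mm j).symm
    have step : ∑ j ∈ range (mm+1), ((j+1 : ℕ) : ℝ) * (((j+1 : ℕ) : ℝ) - 1) *
          (((mm+1).choose (j+1) : ℝ) * x ^ (j+1) * y ^ (mm+1 - (j+1)))
        = (mm+1 : ℝ) * x * ∑ j ∈ range (mm+1), (j : ℝ) * ((mm.choose j : ℝ) * x ^ j * y ^ (mm - j)) := by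
      rw [Finset.mul_sum]
      refine Finset.sum_congr rfl fun j _ => ?_
      have := key j
      push_cast at this ⊢
      linear_combination (((j:ℝ)) * x ^ (j+1) * y ^ (mm - j)) * this
    rw [step, binom_sum1]
    rcases Nat.eq_zero_or_pos mm with h | h
    · subst h; simp
    · have h1 : mm + 1 - 2 = mm - 1 := by omega
      have h2 : mm + 1 - 1 = mm := by omega
      rw [h1, h2]
      have h3 : ((mm - 1 : ℕ) : ℝ) = (mm : ℝ) - 1 := by
        have : (1:ℕ) ≤ mm := h
        push_cast [Nat.cast_sub this]
        ring
      push_cast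
      ring

lemma step_sum1 (m : ℕ) (hm : 1 ≤ m) (T w c : ℝ) (hT : T ≠ 0) :
    ∑ k ∈ range (m+1), ((m.choose k : ℝ) * w ^ k * (T - w) ^ (m - k) / T ^ m) * (w + c * k)
      = w + c * m * w / T := by
  obtain ⟨mm, rfl⟩ : ∃ mm, m = mm + 1 := ⟨m - 1, by omega⟩
  have hsplit : ∑ k ∈ range (mm+1+1), (((mm+1).choose k : ℝ) * w ^ k * (T - w) ^ (mm+1 - k) / T ^ (mm+1)) * (w + c * k)
      = (w * ∑ k ∈ range (mm+1+1), ((mm+1).choose k : ℝ) * w ^ k * (T - w) ^ (mm+1 - k)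
        + c * ∑ k ∈ range (mm+1+1), (k : ℝ) * (((mm+1).choose k : ℝ) * w ^ k * (T - w) ^ (mm+1 - k))) / T ^ (mm+1) := by
    rw [Finset.mul_sum, Finset.mul_sum, ← Finset.sum_add_distrib, Finset.sum_div]
    exact Finset.sum_congr rfl fun k _ => by ring
  rw [hsplit, binom_sum0, binom_sum1]
  have hwT : w + (T - w) = T := by ring
  rw [hwT]
  have h1 : (mm + 1 : ℕ) - 1 = mm := rfl
  rw [h1]
  field_simp
  push_cast
  ring

lemma step_sum2 (m : ℕ) (hm : 1 ≤ m) (T w c : ℝ) (hT : T ≠ 0) :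
    ∑ k ∈ range (m+1), ((m.choose k : ℝ) * w ^ k * (T - w) ^ (m - k) / T ^ m) * (w + c * k) ^ 2
      = w ^ 2 * (1 + 2 * c * m / T + c ^ 2 * m * ((m - 1 : ℕ) : ℝ) / T ^ 2)
        + w * (c ^ 2 * m / T) := by
  obtain ⟨mm, rfl⟩ : ∃ mm, m = mm + 1 := ⟨m - 1, by omega⟩
  have hsplit : ∑ k ∈ range (mm+1+1), (((mm+1).choose k : ℝ) * w ^ k * (T - w) ^ (mm+1 - k) / T ^ (mm+1)) * (w + c * k) ^ 2
      = (w ^ 2 * ∑ k ∈ range (mm+1+1), ((mm+1).choose k : ℝ) * w ^ k * (T - w) ^ (mm+1 - k)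
        + (2 * c * w + c ^ 2) * ∑ k ∈ range (mm+1+1), (k : ℝ) * (((mm+1).choose k : ℝ) * w ^ k * (T - w) ^ (mm+1 - k))
        + c ^ 2 * ∑ k ∈ range (mm+1+1), (k : ℝ) * ((k : ℝ) - 1) * (((mm+1).choose k : ℝ) * w ^ k * (T - w) ^ (mm+1 - k))) / T ^ (mm+1) := by
    rw [Finset.mul_sum, Finset.mul_sum, Finset.mul_sum, ← Finset.sum_add_distrib,
      ← Finset.sum_add_distrib, Finset.sum_div]
    exact Finset.sum_congr rfl fun k _ => by ring
  rw [hsplit, binom_sum0, binom_sum1, binom_sum2']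
  have hwT : w + (T - w) = T := by ring
  rw [hwT]
  have h1 : (mm + 1 : ℕ) - 1 = mm := rfl
  have h2 : (mm + 1 : ℕ) - 2 = mm - 1 := by omega
  rw [h1, h2]
  rcases Nat.eq_zero_or_pos mm with h | h
  · subst h; field_simp; ring
  · obtain ⟨p, rfl⟩ : ∃ p, mm = p + 1 := ⟨mm - 1, by omega⟩
    have h3 : (p + 1 : ℕ) - 1 = p := rfl
    rw [h3]
    field_simp
    push_cast
    ring

lemma urnT_ne (W0 B0 m c n : ℕ) (hW0 : 1 ≤ W0) : (urnT W0 B0 m c n : ℝ) ≠ 0 := by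
  have : 0 < urnT W0 B0 m c n := by simp only [urnT]; omega
  exact_mod_cast this.ne'

lemma momR_zero (W0 B0 m c s : ℕ) : momR W0 B0 m c s 0 = (W0 : ℝ) ^ s := by
  rw [momR]
  show ∑ w ∈ range (urnT W0 B0 m c 0 + 1), (if w = W0 then (1:ℝ) else 0) * (w : ℝ) ^ s = _
  simp only [ite_mul, one_mul, zero_mul]
  rw [Finset.sum_ite_eq', if_pos]
  simp only [Finset.mem_range, urnT]
  omega

lemma momR1_succ (W0 B0 m c n : ℕ) (hm : 1 ≤ m) (hW0 : 1 ≤ W0) :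
    momR W0 B0 m c 1 (n+1)
      = (((urnT W0 B0 m c n : ℝ) + m * c) / (urnT W0 B0 m c n : ℝ)) * momR W0 B0 m c 1 n := by
  have hT := urnT_ne W0 B0 m c n hW0
  set T : ℝ := (urnT W0 B0 m c n : ℝ) with hTdef
  rw [momR_succ, momR, Finset.mul_sum]
  refine Finset.sum_congr rfl fun w hw => ?_
  have hin : ∑ k ∈ range (m+1),
      ((m.choose k : ℝ) * (w : ℝ) ^ k * (T - (w : ℝ)) ^ (m - k) / T ^ m) * (((w + c * k : ℕ) : ℝ)) ^ 1
      = (w : ℝ) + (c : ℝ) * m * w / T := by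
    rw [← step_sum1 m hm T (w : ℝ) (c : ℝ) hT]
    refine Finset.sum_congr rfl fun k _ => ?_
    push_cast
    ring
  rw [hin]
  field_simp

lemma momR2_succ (W0 B0 m c n : ℕ) (hm : 1 ≤ m) (hW0 : 1 ≤ W0) :
    momR W0 B0 m c 2 (n+1)
      = (1 + 2 * c * m / (urnT W0 B0 m c n : ℝ)
            + (c:ℝ) ^ 2 * m * ((m - 1 : ℕ) : ℝ) / (urnT W0 B0 m c n : ℝ) ^ 2) * momR W0 B0 m c 2 n
        + ((c:ℝ) ^ 2 * m / (urnT W0 B0 m c n : ℝ)) * momR W0 B0 m c 1 n := by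
  have hT := urnT_ne W0 B0 m c n hW0
  set T : ℝ := (urnT W0 B0 m c n : ℝ) with hTdef
  rw [momR_succ, momR, momR, Finset.mul_sum, Finset.mul_sum, ← Finset.sum_add_distrib]
  refine Finset.sum_congr rfl fun w hw => ?_
  have hin : ∑ k ∈ range (m+1),
      ((m.choose k : ℝ) * (w : ℝ) ^ k * (T - (w : ℝ)) ^ (m - k) / T ^ m) * (((w + c * k : ℕ) : ℝ)) ^ 2
      = (w : ℝ) ^ 2 * (1 + 2 * (c:ℝ) * m / T + (c:ℝ) ^ 2 * m * ((m - 1 : ℕ) : ℝ) / T ^ 2)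
        + (w : ℝ) * ((c:ℝ) ^ 2 * m / T) := by
    rw [← step_sum2 m hm T (w : ℝ) (c : ℝ) hT]
    refine Finset.sum_congr rfl fun k _ => ?_
    push_cast
    ring
  rw [hin]
  ring

lemma mom1_closed (W0 B0 m c : ℕ) (hm : 1 ≤ m) (hW0 : 1 ≤ W0) (hB0 : 1 ≤ B0) :
    ∀ n : ℕ, momR W0 B0 m c 1 n
      = (W0 : ℝ) / ((W0 : ℝ) + B0) * ((n : ℝ) * m * c + ((W0 : ℝ) + B0)) := by
  have hT0 : ((W0 : ℝ) + B0) ≠ 0 := by positivity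
  intro n
  induction n with
  | zero => rw [momR_zero]; field_simp; push_cast; ring
  | succ n ih =>
    rw [momR1_succ W0 B0 m c n hm hW0, ih]
    have hT := urnT_ne W0 B0 m c n hW0
    have hTcast : (urnT W0 B0 m c n : ℝ) = (W0 : ℝ) + B0 + n * m * c := by
      simp only [urnT]; push_cast; ring
    rw [hTcast] at hT ⊢
    field_simp
    push_cast
    ring

noncomputable def Fp (x : ℝ) (n : ℕ) : ℝ := ∏ j ∈ Finset.range n, (x + j)

lemma Fp_succ (x : ℝ) (n : ℕ) : Fp x (n+1) = Fp x n * (x + n) :=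
  Finset.prod_range_succ _ _

lemma Fp_pos (x : ℝ) (hx : 0 < x) (n : ℕ) : 0 < Fp x n := by
  refine Finset.prod_pos fun j _ => ?_
  positivity

lemma gchoose_eq (x : ℝ) (n : ℕ) :
    gchoose ((n : ℝ) - 1 + x) n = Fp x n / (n.factorial : ℝ) := by
  rw [gchoose, Fp]
  congr 1
  rw [← Finset.prod_range_reflect (fun j => x + (j : ℝ)) n]
  refine Finset.prod_congr rfl fun i hi => ?_
  simp only [Finset.mem_range] at hi
  have h1 : i ≤ n - 1 := by omega
  have h2 : 1 ≤ n := by omega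
  rw [Nat.cast_sub h1, Nat.cast_sub h2]
  push_cast
  ring

lemma gchoose_eq' (x : ℝ) (ℓ : ℕ) :
    gchoose ((ℓ : ℝ) + x) (ℓ+1) = Fp x (ℓ+1) / ((ℓ+1).factorial : ℝ) := by
  have h := gchoose_eq x (ℓ+1)
  rw [show (((ℓ+1 : ℕ)) : ℝ) - 1 + x = (ℓ : ℝ) + x by push_cast; ring] at h
  exact h


lemma mom2_closed (W0 B0 m c : ℕ) (hm : 1 ≤ m) (hc : 1 ≤ c)
    (hW0 : 1 ≤ W0) (hB0 : 1 ≤ B0) (hT0 : m ≤ W0 + B0)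
    (mu1 mu2 : ℝ)
    (hmu1 : mu1 = (((W0 : ℝ) + B0) + (m : ℝ) * c + (c : ℝ) * Real.sqrt m) / ((m : ℝ) * c))
    (hmu2 : mu2 = (((W0 : ℝ) + B0) + (m : ℝ) * c - (c : ℝ) * Real.sqrt m) / ((m : ℝ) * c)) :
    ∀ n : ℕ, momR W0 B0 m c 2 n
      = Fp mu1 n * Fp mu2 n / (Fp (((W0 : ℝ) + B0) / ((m : ℝ) * c)) n) ^ 2 *
          ((W0 : ℝ) ^ 2 + (W0 : ℝ) * (c : ℝ) ^ 2 * m / ((W0 : ℝ) + B0) *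
            ∑ ℓ ∈ Finset.range n,
              (Fp (((W0 : ℝ) + B0) / ((m : ℝ) * c)) (ℓ+1)) ^ 2 /
                (Fp mu1 (ℓ+1) * Fp mu2 (ℓ+1))) := by
  have hmpos : (0:ℝ) < m := by exact_mod_cast hm
  have hcpos : (0:ℝ) < c := by exact_mod_cast hc
  have hmc : (0:ℝ) < (m : ℝ) * c := by positivity
  have hT0pos : (0:ℝ) < (W0 : ℝ) + B0 := by positivity
  have hs : Real.sqrt m ^ 2 = (m : ℝ) := Real.sq_sqrt hmpos.le
  have hm1r : (1:ℝ) ≤ m := by exact_mod_cast hm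
  have hsqrt_le : Real.sqrt m ≤ (m : ℝ) := by
    rw [Real.sqrt_le_left hmpos.le]
    nlinarith
  have hmu1pos : 0 < mu1 := by
    rw [hmu1]
    have h0 : 0 ≤ Real.sqrt (m : ℝ) := Real.sqrt_nonneg _
    apply div_pos (by nlinarith) hmc
  have hmu2pos : 0 < mu2 := by
    rw [hmu2]
    apply div_pos (by nlinarith) hmc
  have htpos : 0 < ((W0 : ℝ) + B0) / ((m : ℝ) * c) := by positivity
  have hprod : ∀ n : ℕ, (mu1 + n) * (mu2 + n) * ((m:ℝ)*c)^2
      = (((W0:ℝ)+B0) + n*m*c + m*c)^2 - (c:ℝ)^2 * m := by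
    intro n
    rw [hmu1, hmu2]
    have expand : ∀ s' : ℝ,
        (((((W0:ℝ)+B0) + (m:ℝ)*c + s')/((m:ℝ)*c)) + n) * (((((W0:ℝ)+B0) + (m:ℝ)*c - s')/((m:ℝ)*c)) + n) * ((m:ℝ)*c)^2
          = (((W0:ℝ)+B0) + n*m*c + m*c)^2 - s'^2 := by
      intro s'
      field_simp
      ring
    rw [expand ((c:ℝ) * Real.sqrt m), mul_pow, hs]
  intro n
  induction n with
  | zero => simp [momR_zero, Fp]
  | succ n ih =>
    rw [momR2_succ W0 B0 m c n hm hW0, ih, mom1_closed W0 B0 m c hm hW0 hB0 n]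
    have hTn : (urnT W0 B0 m c n : ℝ) = (((W0 : ℝ) + B0) / ((m : ℝ) * c) + n) * ((m:ℝ)*c) := by
      simp only [urnT]
      push_cast
      field_simp
    have hm1 : ((m - 1 : ℕ) : ℝ) = (m : ℝ) - 1 := by
      rw [Nat.cast_sub hm, Nat.cast_one]
    have htn : (0:ℝ) < ((W0 : ℝ) + B0) / ((m : ℝ) * c) + n := by positivity
    have hmu1n : (0:ℝ) < mu1 + n := by positivity
    have hmu2n : (0:ℝ) < mu2 + n := by positivity
    have hp := hprod n
    have hS : (0:ℝ) < (W0 : ℝ) + B0 + n*m*c := by positivity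
    have hTc : (urnT W0 B0 m c n : ℝ) = (W0 : ℝ) + B0 + n*m*c := by
      simp only [urnT]; push_cast; ring
    have hr : (((W0 : ℝ) + B0) / ((m : ℝ) * c) + n) * ((m:ℝ)*c) = (W0 : ℝ) + B0 + n*m*c := by
      field_simp
    have h1 : (mu1 + n) * (mu2 + n) / ((((W0 : ℝ) + B0) / ((m : ℝ) * c) + n) ^ 2)
        = ((((W0:ℝ)+B0) + n*m*c + m*c)^2 - (c:ℝ)^2*m) / (((W0:ℝ)+B0) + n*m*c)^2 := by
      rw [div_eq_div_iff (by positivity) (by positivity)]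
      calc (mu1 + n) * (mu2 + n) * (((W0:ℝ)+B0) + n*m*c)^2
          = (mu1 + n) * (mu2 + n) * ((m:ℝ)*c)^2 * ((((W0 : ℝ) + B0) / ((m : ℝ) * c) + n))^2 := by
            rw [← hr]; ring
        _ = ((((W0:ℝ)+B0) + n*m*c + m*c)^2 - (c:ℝ)^2*m) * ((((W0 : ℝ) + B0) / ((m : ℝ) * c) + n))^2 := by
            rw [hp]
    have hA : 1 + 2 * c * m / (urnT W0 B0 m c n : ℝ)
          + (c:ℝ) ^ 2 * m * ((m - 1 : ℕ) : ℝ) / (urnT W0 B0 m c n : ℝ) ^ 2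
        = (mu1 + n) * (mu2 + n) / ((((W0 : ℝ) + B0) / ((m : ℝ) * c) + n) ^ 2) := by
      rw [hTc, hm1, h1]
      field_simp
      ring
    rw [hA, hTn, Finset.sum_range_succ, Fp_succ, Fp_succ, Fp_succ]
    have hF1 := Fp_pos mu1 hmu1pos n
    have hF2 := Fp_pos mu2 hmu2pos n
    have hFt := Fp_pos _ htpos n
    have hF1' := Fp_pos mu1 hmu1pos (n+1)
    have hF2' := Fp_pos mu2 hmu2pos (n+1)
    have hFt' := Fp_pos _ htpos (n+1)
    rw [Fp_succ] at hF1'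
    rw [Fp_succ] at hF2'
    rw [Fp_succ] at hFt'
    field_simp
    ring

/-- In model `R`, the exact expectation `E(W_n) = (W_0/T_0)·(n·m·c + T_0)` and the exact
second moment `E(W_n²)`, which determines the variance `V(W_n) = E(W_n²) − E(W_n)²`. -/
theorem modelR_expectation_and_secondMoment (W0 B0 m c : ℕ) (hm : 1 ≤ m) (hc : 1 ≤ c)
    (hW0 : 1 ≤ W0) (hB0 : 1 ≤ B0) (hT0 : m ≤ W0 + B0)
    (mu1 mu2 : ℝ)
    (hmu1 : mu1 = (((W0 : ℝ) + B0) + (m : ℝ) * c + (c : ℝ) * Real.sqrt m) / ((m : ℝ) * c))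
    (hmu2 : mu2 = (((W0 : ℝ) + B0) + (m : ℝ) * c - (c : ℝ) * Real.sqrt m) / ((m : ℝ) * c)) :
    (∀ n : ℕ, momR W0 B0 m c 1 n =
      (W0 : ℝ) / ((W0 : ℝ) + B0) * ((n : ℝ) * m * c + ((W0 : ℝ) + B0))) ∧
    (∀ n : ℕ, momR W0 B0 m c 2 n =
      (gchoose ((n : ℝ) - 1 + mu1) n * gchoose ((n : ℝ) - 1 + mu2) n) /
          (gchoose ((n : ℝ) - 1 + ((W0 : ℝ) + B0) / ((m : ℝ) * c)) n) ^ 2 *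
        ((W0 : ℝ) ^ 2 + (W0 : ℝ) * (c : ℝ) ^ 2 * m / ((W0 : ℝ) + B0) *
          ∑ ℓ ∈ Finset.range n,
            (gchoose ((ℓ : ℝ) + ((W0 : ℝ) + B0) / ((m : ℝ) * c)) (ℓ + 1)) ^ 2 /
              (gchoose ((ℓ : ℝ) + mu1) (ℓ + 1) * gchoose ((ℓ : ℝ) + mu2) (ℓ + 1)))) := by
  refine ⟨mom1_closed W0 B0 m c hm hW0 hB0, fun n => ?_⟩
  rw [mom2_closed W0 B0 m c hm hc hW0 hB0 hT0 mu1 mu2 hmu1 hmu2 n]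
  have hfac : ((n.factorial : ℝ)) ≠ 0 := by exact_mod_cast n.factorial_ne_zero
  have h1 : ∀ a b e f : ℝ, f ≠ 0 → a / f * (b / f) / (e / f) ^ 2 = a * b / e ^ 2 := by
    intro a b e f hf
    rcases eq_or_ne e 0 with rfl | he
    · simp
    · field_simp
  have h2 : ∀ a b e f : ℝ, f ≠ 0 → (e / f) ^ 2 / (a / f * (b / f)) = e ^ 2 / (a * b) := by
    intro a b e f hf
    rcases eq_or_ne a 0 with rfl | ha
    · simp
    · rcases eq_or_ne b 0 with rfl | hb
      · simp
      · field_simp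
  have hsum : ∀ ℓ : ℕ,
      (Fp (((W0 : ℝ) + B0) / ((m : ℝ) * c)) (ℓ+1) / (((ℓ+1).factorial : ℝ))) ^ 2 /
          (Fp mu1 (ℓ+1) / (((ℓ+1).factorial : ℝ)) * (Fp mu2 (ℓ+1) / (((ℓ+1).factorial : ℝ))))
        = (Fp (((W0 : ℝ) + B0) / ((m : ℝ) * c)) (ℓ+1)) ^ 2 / (Fp mu1 (ℓ+1) * Fp mu2 (ℓ+1)) := by
    intro ℓ
    exact h2 _ _ _ _ (by exact_mod_cast (ℓ+1).factorial_ne_zero)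
  simp only [gchoose_eq, gchoose_eq', h1 _ _ _ _ hfac, hsum]
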